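/- Let n ≥ 2 and let f : ℝⁿ → ℝ be indistinguishable (invariant under every permutation of its n arguments) and twice continuously differentiable in a neighborhood of the symmetric point c^⊗n = (c,…,c). Let r̄(x) = f(x,…,x) be the diagonal restriction. Then for every h ∈ ℝⁿ with Σ_{j=1}^n h_j = 0, the second-order Taylor term of f at c^⊗n in direction h equals (1/2) Σ_{j,j'} h_j h_{j'} ∂²f/∂a_j∂a_{j'} (c^⊗n) = (n / (2(n−1))) · ( −(1/n²) r̄''(c) + ∂²f/∂a_1² (c^⊗n) ) · Σ_{j=1}^n h_j². -/

import Mathlib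

/-- For an indistinguishable function `f : ℝⁿ → ℝ` which is C² on an
open neighborhood of the symmetric point `(c,…,c)`, with diagonal restriction
`r̄(x) = f(x,…,x)`, the second-order Taylor term in any zero-mean direction `h`
equals `(n/(2(n−1))) · (−(1/n²) r̄''(c) + ∂²f/∂a₁²(c^⊗n)) · Σ h_j²`. -/
theorem stmt_5 (n : ℕ) (hn : 2 ≤ n) (f : (Fin n → ℝ) → ℝ) (c : ℝ)
    (s : Set (Fin n → ℝ)) (hs : IsOpen s) (hc : (fun _ => c) ∈ s)
    (hsym : ∀ (π : Equiv.Perm (Fin n)) (a : Fin n → ℝ), f (a ∘ π) = f a)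
    (hf : ContDiffOn ℝ 2 f s) :
    ∀ h : Fin n → ℝ, ∑ j, h j = 0 →
      (1 / 2) * ∑ j, ∑ j', h j * h j' *
          fderiv ℝ (fun y => fderiv ℝ f y (Pi.single j' 1)) (fun _ => c) (Pi.single j 1) =
        ((n : ℝ) / (2 * ((n : ℝ) - 1))) *
          (-(1 / (n : ℝ) ^ 2) * deriv (deriv (fun x : ℝ => f (fun _ => x))) c +
            fderiv ℝ (fun y => fderiv ℝ f y (Pi.single (⟨0, by omega⟩ : Fin n) 1))
              (fun _ => c) (Pi.single (⟨0, by omega⟩ : Fin n) 1)) *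
          ∑ j, (h j) ^ 2 := by
  intro h hsum
  classical
  set c₀ : Fin n → ℝ := fun _ => c with hc₀
  set L : Equiv.Perm (Fin n) → ((Fin n → ℝ) →L[ℝ] (Fin n → ℝ)) :=
    fun π => ContinuousLinearMap.pi (fun i => ContinuousLinearMap.proj (π i)) with hLdef
  have hLapp : ∀ π a, L π a = a ∘ π := fun π a => rfl
  have hLc₀ : ∀ π, L π c₀ = c₀ := fun π => rfl
  have hfd : ∀ y ∈ s, DifferentiableAt ℝ f y := fun y hy =>
    (hf.differentiableOn (by norm_num)).differentiableAt (hs.mem_nhds hy)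
  set g : (Fin n → ℝ) → ((Fin n → ℝ) →L[ℝ] ℝ) := fun y => fderiv ℝ f y with hgdef
  have hg : ContDiffOn ℝ 1 g s := hf.fderiv_of_isOpen hs (by norm_num)
  have hgd : ∀ y ∈ s, DifferentiableAt ℝ g y := fun y hy =>
    (hg.differentiableOn (by norm_num)).differentiableAt (hs.mem_nhds hy)
  have hgc : HasFDerivAt g (fderiv ℝ g c₀) c₀ := (hgd c₀ hc).hasFDerivAt
  set B := fderiv ℝ g c₀ with hBdef
  have hsnd : ∀ u v : Fin n → ℝ, fderiv ℝ (fun y => fderiv ℝ f y v) c₀ u = B u v := by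
    intro u v
    have h1 := ((ContinuousLinearMap.apply ℝ ℝ v).hasFDerivAt.comp c₀ hgc).fderiv
    rw [show (fun y => fderiv ℝ f y v) =
      (fun y => (ContinuousLinearMap.apply ℝ ℝ v) (g y)) from rfl]
    rw [show (fun y => (ContinuousLinearMap.apply ℝ ℝ v) (g y)) =
      ((ContinuousLinearMap.apply ℝ ℝ v) ∘ g) from rfl, h1]
    rfl
  -- permutation invariance of B
  have hfL : ∀ π : Equiv.Perm (Fin n), f ∘ (L π) = f := by
    intro π; funext a; exact hsym π a
  have hgL : ∀ (π : Equiv.Perm (Fin n)) (y), L π y ∈ s → g y = (g (L π y)).comp (L π) := by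
    intro π y hy
    have h1 : HasFDerivAt (f ∘ L π) ((g (L π y)).comp (L π)) y :=
      (hfd _ hy).hasFDerivAt.comp y (L π).hasFDerivAt
    rw [hfL π] at h1
    exact h1.fderiv
  have hBinv : ∀ (π : Equiv.Perm (Fin n)) (u v : Fin n → ℝ), B u v = B (L π u) (L π v) := by
    intro π u v
    have hopen : IsOpen ((L π) ⁻¹' s) := hs.preimage (L π).continuous
    have hmem : c₀ ∈ (L π) ⁻¹' s := by
      show L π c₀ ∈ s
      rw [hLc₀ π]; exact hc
    have hev : (fun y => g y v) =ᶠ[nhds c₀] (fun y => g (L π y) (L π v)) := by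
      filter_upwards [hopen.mem_nhds hmem] with y hy
      rw [hgL π y hy]; rfl
    have hout : HasFDerivAt (fun z => g z (L π v))
        ((ContinuousLinearMap.apply ℝ ℝ (L π v)).comp B) c₀ :=
      (ContinuousLinearMap.apply ℝ ℝ (L π v)).hasFDerivAt.comp c₀ hgc
    have h2 : HasFDerivAt (fun y => g (L π y) (L π v))
        (((ContinuousLinearMap.apply ℝ ℝ (L π v)).comp B).comp (L π)) c₀ :=
      HasFDerivAt.comp (g := fun z => g z (L π v)) c₀ (by rw [hLc₀ π]; exact hout) (L π).hasFDerivAt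
    have e1 : fderiv ℝ (fun y => g y v) c₀ = fderiv ℝ (fun y => g (L π y) (L π v)) c₀ :=
      hev.fderiv_eq
    have e2 : fderiv ℝ (fun y => g y v) c₀ u = B u v := hsnd u v
    rw [e1, h2.fderiv] at e2
    exact e2.symm
  set D : Fin n → Fin n → ℝ := fun j j' => B (Pi.single j 1) (Pi.single j' 1) with hDdef
  have hLsingle : ∀ (π : Equiv.Perm (Fin n)) (j : Fin n),
      L π (Pi.single j 1) = Pi.single (π.symm j) (1 : ℝ) := by
    intro π j; funext i
    rw [hLapp]
    simp only [Function.comp_apply, Pi.single_apply]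
    by_cases hij : π i = j
    · have hpi : i = π.symm j := by rw [← hij, Equiv.symm_apply_apply]
      simp [hij, hpi]
    · have hpi : ¬ (i = π.symm j) := by
        intro hEq; exact hij (by rw [hEq, Equiv.apply_symm_apply])
      simp [hij, hpi]
  have hDswap : ∀ (π : Equiv.Perm (Fin n)) (j j' : Fin n),
      D j j' = D (π.symm j) (π.symm j') := by
    intro π j j'
    have := hBinv π (Pi.single j 1) (Pi.single j' 1)
    rw [hLsingle, hLsingle] at this
    exact this
  set j₀ : Fin n := ⟨0, by omega⟩ with hj₀
  set j₁ : Fin n := ⟨1, by omega⟩ with hj₁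
  have hj01 : j₀ ≠ j₁ := by
    simp [hj₀, hj₁, Fin.ext_iff]
  set α : ℝ := D j₀ j₀ with hαdef
  set β : ℝ := D j₀ j₁ with hβdef
  have hdiag : ∀ j, D j j = α := by
    intro j
    have := hDswap (Equiv.swap j j₀) j j
    simpa [Equiv.symm_swap, Equiv.swap_apply_left] using this
  have hoff0 : ∀ j', j' ≠ j₀ → D j₀ j' = β := by
    intro j' hj'
    by_cases hj'1 : j' = j₁
    · rw [hj'1]
    · have := hDswap (Equiv.swap j' j₁) j₀ j'
      rw [Equiv.symm_swap, Equiv.swap_apply_left,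
        Equiv.swap_apply_of_ne_of_ne (Ne.symm hj') hj01] at this
      exact this
  have hoff : ∀ j j', j ≠ j' → D j j' = β := by
    intro j j' hjj'
    by_cases hj : j = j₀
    · subst hj; exact hoff0 j' (Ne.symm hjj')
    · have hst := hDswap (Equiv.swap j j₀) j j'
      rw [Equiv.symm_swap, Equiv.swap_apply_left] at hst
      have hne : Equiv.swap j j₀ j' ≠ j₀ := by
        intro hEq
        apply hjj'
        have h2 : Equiv.swap j j₀ j' = Equiv.swap j j₀ j := by
          rw [Equiv.swap_apply_left, hEq]
        exact ((Equiv.swap j j₀).injective h2).symm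
      rw [hst]
      exact hoff0 _ hne
  have hDval : ∀ j j', D j j' = if j = j' then α else β := by
    intro j j'
    by_cases hjj : j = j'
    · subst hjj; simp [hdiag j]
    · simp [hjj, hoff j j' hjj]
  -- the diagonal restriction
  set Δ : ℝ →L[ℝ] (Fin n → ℝ) :=
    ContinuousLinearMap.pi (fun _ : Fin n => ContinuousLinearMap.id ℝ ℝ) with hΔdef
  have hΔapp : ∀ x : ℝ, Δ x = fun _ => x := fun x => rfl
  have ht : IsOpen (Δ ⁻¹' s) := hs.preimage Δ.continuous
  have hct : c ∈ Δ ⁻¹' s := hc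
  have hr1 : ∀ x ∈ Δ ⁻¹' s,
      HasDerivAt (fun x : ℝ => f (fun _ => x)) (g (Δ x) (fun _ => 1)) x := by
    intro x hx
    have h1 : HasFDerivAt (f ∘ Δ) ((g (Δ x)).comp Δ) x :=
      (hfd _ hx).hasFDerivAt.comp x Δ.hasFDerivAt
    exact h1.hasDerivAt
  have hderiv_ev : deriv (fun x : ℝ => f (fun _ => x)) =ᶠ[nhds c]
      fun x => g (Δ x) (fun _ => 1) := by
    filter_upwards [ht.mem_nhds hct] with x hx
    exact (hr1 x hx).deriv
  have h2nd : HasDerivAt (fun x : ℝ => g (Δ x) (fun _ => 1))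
      (B (fun _ => 1) (fun _ => 1)) c := by
    have hout : HasFDerivAt ((ContinuousLinearMap.apply ℝ ℝ ((fun _ => 1) : Fin n → ℝ)) ∘ g)
        ((ContinuousLinearMap.apply ℝ ℝ ((fun _ => 1) : Fin n → ℝ)).comp B) c₀ :=
      (ContinuousLinearMap.apply ℝ ℝ _).hasFDerivAt.comp c₀ hgc
    exact (hout.comp c Δ.hasFDerivAt).hasDerivAt
  have hr'' : deriv (deriv (fun x : ℝ => f (fun _ => x))) c = B (fun _ => 1) (fun _ => 1) := by
    rw [hderiv_ev.deriv_eq]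
    exact h2nd.deriv
  have hone : ((fun _ => (1 : ℝ)) : Fin n → ℝ) = ∑ j, Pi.single j (1 : ℝ) := by
    funext i
    simp [Finset.sum_apply, Pi.single_apply]
  have hBsum : B (fun _ => 1) (fun _ => 1) = ∑ j, ∑ j', D j j' := by
    rw [hone, map_sum]
    simp only [ContinuousLinearMap.sum_apply, map_sum]
    rw [Finset.sum_comm]
  have hcard : (Finset.univ : Finset (Fin n)).card = n := Finset.card_univ.trans (Fintype.card_fin n)
  have hBsumval : B (fun _ => 1) (fun _ => 1) = (n : ℝ) * α + ((n : ℝ) ^ 2 - n) * β := by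
    rw [hBsum]
    have hinner : ∀ j : Fin n, ∑ j', D j j' = α + ((n : ℝ) - 1) * β := by
      intro j
      have e : ∀ j' : Fin n, D j j' = β + (if j = j' then (α - β) else 0) := by
        intro j'
        rw [hDval j j']
        by_cases hjj : j = j' <;> simp [hjj]
      rw [Finset.sum_congr rfl fun j' _ => e j', Finset.sum_add_distrib, Finset.sum_ite_eq,
        Finset.sum_const, hcard]
      simp [nsmul_eq_mul]
      ring
    rw [Finset.sum_congr rfl (fun j _ => hinner j), Finset.sum_const, hcard]
    simp [nsmul_eq_mul]
    ring
  -- compute the LHS double sum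
  have hLHS : ∑ j, ∑ j', h j * h j' * D j j' = (α - β) * ∑ j, (h j) ^ 2 := by
    have step : ∀ j : Fin n, ∑ j', h j * h j' * D j j'
        = β * (h j * ∑ j', h j') + (α - β) * (h j) ^ 2 := by
      intro j
      have e : ∀ j' : Fin n, h j * h j' * D j j'
          = β * (h j * h j') + (if j = j' then (α - β) * (h j) ^ 2 else 0) := by
        intro j'
        rw [hDval j j']
        by_cases hjj : j = j'
        · subst hjj; simp; ring
        · simp [hjj]; ring
      rw [Finset.sum_congr rfl fun j' _ => e j', Finset.sum_add_distrib, Finset.sum_ite_eq]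
      rw [← Finset.mul_sum, ← Finset.mul_sum]
      simp
    rw [Finset.sum_congr rfl (fun j _ => step j)]
    rw [Finset.sum_add_distrib, hsum]
    simp [← Finset.mul_sum]
  -- rewrite the goal
  have hsnd' : ∀ j j' : Fin n,
      fderiv ℝ (fun y => fderiv ℝ f y (Pi.single j' 1)) c₀ (Pi.single j 1) = D j j' :=
    fun j j' => hsnd _ _
  simp only [hsnd']
  rw [hLHS, hr'', hBsumval, hdiag j₀]
  have hn0 : (n : ℝ) ≠ 0 := by positivity
  have hn1 : (n : ℝ) - 1 ≠ 0 := by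
    have h1 : (1 : ℝ) < (n : ℝ) := by exact_mod_cast (by omega : 1 < n)
    exact ne_of_gt (sub_pos.mpr h1)
  field_simp
  ring
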